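/- Second-variation identity for Hamilton's action in a linear potential: let F be a real inner product space, m > 0, g, x₀, v₀ ∈ F, V₀ ∈ ℝ, and t₁ < t₃ real numbers. Let x(t) = x₀ + t•v₀ − (t²/(2m))•g, so x'(t) = v₀ − (t/m)•g and m·x'' = −g, and let V(y) = V₀ + ⟪g, y⟫. Suppose η : ℝ → F has derivative η'(t) at every t ∈ [t₁, t₃], η' is continuous on [t₁, t₃], and η(t₁) = η(t₃) = 0. Then ∫_{t₁}^{t₃} (m/2·‖x'(t) + η'(t)‖² − V(x(t) + η(t))) dt − ∫_{t₁}^{t₃} (m/2·‖x'(t)‖² − V(x(t))) dt = (m/2)·∫_{t₁}^{t₃} ‖η'(t)‖² dt. -/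

import Mathlib

open MeasureTheory RealInnerProductSpace

/-- Second-variation identity for Hamilton's action in a linear potential: for the free
trajectory `x` with velocity `x'` (satisfying `m x'' = -g`) and any variation `η` vanishing
at the endpoints, the difference of Hamilton actions equals `(m/2) ∫ ‖η'‖²`. -/
theorem hamilton_second_variation_identity {F : Type*} [NormedAddCommGroup F]
    [InnerProductSpace ℝ F]
    (m : ℝ) (hm : 0 < m) (g x₀ v₀ : F) (V₀ : ℝ) (t₁ t₃ : ℝ) (ht : t₁ < t₃)
    (x x' : ℝ → F)
    (hx : ∀ t : ℝ, x t = x₀ + t • v₀ - (t ^ 2 / (2 * m)) • g)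
    (hx' : ∀ t : ℝ, x' t = v₀ - (t / m) • g)
    (V : F → ℝ) (hV : ∀ y : F, V y = V₀ + ⟪g, y⟫)
    (η η' : ℝ → F)
    (hη : ∀ t ∈ Set.Icc t₁ t₃, HasDerivAt η (η' t) t)
    (hη' : ContinuousOn η' (Set.Icc t₁ t₃))
    (hη₁ : η t₁ = 0) (hη₃ : η t₃ = 0) :
    (∫ t in t₁..t₃, (m / 2 * ‖x' t + η' t‖ ^ 2 - V (x t + η t))) -
        (∫ t in t₁..t₃, (m / 2 * ‖x' t‖ ^ 2 - V (x t))) =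
      m / 2 * ∫ t in t₁..t₃, ‖η' t‖ ^ 2 := by
  have hIcc : Set.uIcc t₁ t₃ = Set.Icc t₁ t₃ := Set.uIcc_of_le ht.le
  have hηc : ContinuousOn η (Set.Icc t₁ t₃) := fun t htm =>
    (hη t htm).continuousAt.continuousWithinAt
  have hx'c : Continuous x' := by
    have : x' = fun t : ℝ => v₀ - (t / m) • g := funext hx'
    rw [this]; fun_prop
  -- the cross term is a total derivative
  set f : ℝ → ℝ := fun t => m * ⟪x' t, η t⟫ with hf_def
  have hf : ∀ t ∈ Set.uIcc t₁ t₃,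
      HasDerivAt f (m * ⟪x' t, η' t⟫ - ⟪g, η t⟫) t := by
    intro t htm
    rw [hIcc] at htm
    have hx'd : HasDerivAt x' ((-(1 / m)) • g) t := by
      have h1 : HasDerivAt (fun s : ℝ => (s / m) • g) ((1 / m) • g) t := by
        have : HasDerivAt (fun s : ℝ => s / m) (1 / m) t :=
          (hasDerivAt_id t).div_const m
        simpa using this.smul_const g
      have h2 : HasDerivAt (fun s : ℝ => v₀ - (s / m) • g) ((-(1 / m)) • g) t := by
        simpa [neg_smul] using h1.const_sub v₀
      have : x' = fun s : ℝ => v₀ - (s / m) • g := funext hx'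
      rw [this]; exact h2
    have hinner : HasDerivAt (fun s => ⟪x' s, η s⟫)
        (⟪x' t, η' t⟫ + ⟪(-(1 / m)) • g, η t⟫) t := hx'd.inner ℝ (hη t htm)
    have := hinner.const_mul m
    convert this using 1
    case e'_4 => rfl
    case e'_5 => rfl
    rw [real_inner_smul_left]
    field_simp
    ring
  have hfint : IntervalIntegrable (fun t => m * ⟪x' t, η' t⟫ - ⟪g, η t⟫)
      volume t₁ t₃ := by
    apply ContinuousOn.intervalIntegrable
    rw [hIcc]
    exact (continuousOn_const.mul ((hx'c.continuousOn).inner hη')).sub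
      (continuousOn_const.inner hηc)
  have hcross : (∫ t in t₁..t₃, (m * ⟪x' t, η' t⟫ - ⟪g, η t⟫)) = 0 := by
    rw [intervalIntegral.integral_eq_sub_of_hasDerivAt hf hfint]
    simp [hf_def, hη₁, hη₃]
  -- integrability of the pieces
  have hI1 : IntervalIntegrable (fun t => m / 2 * ‖x' t + η' t‖ ^ 2 - V (x t + η t))
      volume t₁ t₃ := by
    apply ContinuousOn.intervalIntegrable
    rw [hIcc]
    have hxc : Continuous x := by
      have : x = fun t : ℝ => x₀ + t • v₀ - (t ^ 2 / (2 * m)) • g := funext hx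
      rw [this]; fun_prop
    have hVc : Continuous V := by
      have : V = fun y => V₀ + ⟪g, y⟫ := funext hV
      rw [this]
      exact continuous_const.add (continuous_const.inner continuous_id)
    exact (continuousOn_const.mul (((hx'c.continuousOn.add hη').norm).pow 2)).sub
      (hVc.comp_continuousOn (hxc.continuousOn.add hηc))
  have hI2 : IntervalIntegrable (fun t => m / 2 * ‖x' t‖ ^ 2 - V (x t)) volume t₁ t₃ := by
    apply Continuous.intervalIntegrable
    have hxc : Continuous x := by
      have : x = fun t : ℝ => x₀ + t • v₀ - (t ^ 2 / (2 * m)) • g := funext hx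
      rw [this]; fun_prop
    have hVc : Continuous V := by
      have : V = fun y => V₀ + ⟪g, y⟫ := funext hV
      rw [this]
      exact continuous_const.add (continuous_const.inner continuous_id)
    fun_prop
  have hI3 : IntervalIntegrable (fun t => m / 2 * ‖η' t‖ ^ 2) volume t₁ t₃ := by
    apply ContinuousOn.intervalIntegrable
    rw [hIcc]
    exact continuousOn_const.mul ((hη'.norm).pow 2)
  -- pointwise identity
  have hpt : ∀ t : ℝ,
      (m / 2 * ‖x' t + η' t‖ ^ 2 - V (x t + η t)) - (m / 2 * ‖x' t‖ ^ 2 - V (x t))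
        = m / 2 * ‖η' t‖ ^ 2 + (m * ⟪x' t, η' t⟫ - ⟪g, η t⟫) := by
    intro t
    rw [hV, hV, @norm_add_sq_real, inner_add_right]
    ring
  calc (∫ t in t₁..t₃, (m / 2 * ‖x' t + η' t‖ ^ 2 - V (x t + η t))) -
        (∫ t in t₁..t₃, (m / 2 * ‖x' t‖ ^ 2 - V (x t)))
      = ∫ t in t₁..t₃, ((m / 2 * ‖x' t + η' t‖ ^ 2 - V (x t + η t)) -
          (m / 2 * ‖x' t‖ ^ 2 - V (x t))) := (intervalIntegral.integral_sub hI1 hI2).symm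
    _ = ∫ t in t₁..t₃, (m / 2 * ‖η' t‖ ^ 2 + (m * ⟪x' t, η' t⟫ - ⟪g, η t⟫)) := by
        simp_rw [hpt]
    _ = (∫ t in t₁..t₃, m / 2 * ‖η' t‖ ^ 2) +
        ∫ t in t₁..t₃, (m * ⟪x' t, η' t⟫ - ⟪g, η t⟫) :=
        intervalIntegral.integral_add hI3 hfint
    _ = m / 2 * ∫ t in t₁..t₃, ‖η' t‖ ^ 2 := by
        rw [hcross, add_zero, intervalIntegral.integral_const_mul]
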